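/- Let R → A →g B be a sequence of commutative ring homomorphisms with g integral. Then Ã_{B,R} is a radicial A-algebra; that is, the kernel of the canonical multiplication map γ : Ã_{B,R} ⊗_A Ã_{B,R} → Ã_{B,R} is a nil ideal of Ã_{B,R} ⊗_A Ã_{B,R}. -/

import Mathlib

open scoped TensorProduct

/-- Extend a ring hom to an algebraically closed field along an injective integral extension. -/
lemma exists_ringHom_extend_of_isIntegral {C B L : Type*} [CommRing C] [CommRing B] [Field L]
    [IsAlgClosed L] [Algebra C B] [Algebra.IsIntegral C B]
    (hinj : Function.Injective (algebraMap C B)) (u : C →+* L) :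
    ∃ U : B →+* L, ∀ c : C, U (algebraMap C B c) = u c := by
  haveI : (RingHom.ker u).IsPrime := RingHom.ker_isPrime u
  obtain ⟨q, -, hqprime, hq⟩ :=
    Ideal.exists_ideal_over_prime_of_isIntegral (RingHom.ker u) ⊥ (by
      intro x hx
      simp only [Ideal.mem_comap, Ideal.mem_bot] at hx
      have : x = 0 := hinj (by simpa using hx)
      simp [this, RingHom.mem_ker])
  haveI := hqprime
  set p : Ideal C := q.comap (algebraMap C B) with hp
  have hpker : p = RingHom.ker u := hq
  have hle : ∀ a ∈ p, u a = 0 := fun a ha => by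
    rw [hpker] at ha; exact ha
  let v : C ⧸ p →+* L := Ideal.Quotient.lift p u hle
  letI : Algebra (C ⧸ p) (B ⧸ q) := (Ideal.quotientMap q (algebraMap C B) le_rfl).toAlgebra
  letI : Algebra (C ⧸ p) L := v.toAlgebra
  haveI : Nontrivial (C ⧸ p) := Ideal.Quotient.nontrivial_iff.mpr (by
    rw [hpker]; exact (RingHom.ker_isPrime u).ne_top)
  haveI : Algebra.IsIntegral (C ⧸ p) (B ⧸ q) :=
    ⟨RingHom.IsIntegral.quotient (algebraMap C B) (fun x => Algebra.IsIntegral.isIntegral x)⟩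
  haveI : Algebra.IsAlgebraic (C ⧸ p) (B ⧸ q) := Algebra.IsIntegral.isAlgebraic
  haveI : Module.IsTorsionFree (C ⧸ p) (B ⧸ q) :=
    Module.isTorsionFree_iff_algebraMap_injective.mpr
      (Ideal.quotientMap_injective' (H := le_rfl) le_rfl)
  have hvinj : Function.Injective v := by
    exact RingHom.lift_injective_of_ker_le_ideal p hle hpker.ge
  haveI : Module.IsTorsionFree (C ⧸ p) L := Module.isTorsionFree_iff_algebraMap_injective.mpr hvinj
  let U0 : (B ⧸ q) →ₐ[C ⧸ p] L := IsAlgClosed.lift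
  refine ⟨U0.toRingHom.comp (Ideal.Quotient.mk q), fun c => ?_⟩
  have h1 : (Ideal.Quotient.mk q) (algebraMap C B c)
      = algebraMap (C ⧸ p) (B ⧸ q) (Ideal.Quotient.mk p c) := by
    change _ = Ideal.quotientMap q (algebraMap C B) le_rfl (Ideal.Quotient.mk p c)
    rw [Ideal.quotientMap_mk]
  simp only [RingHom.coe_comp, Function.comp_apply, h1, AlgHom.toRingHom_eq_coe,
    RingHom.coe_coe]
  rw [U0.commutes]
  rfl

set_option maxHeartbeats 1000000 in
set_option synthInstance.maxHeartbeats 1000000 in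
theorem weakNormalization_isRadicial_of_isIntegral
    (R A B : Type*)
    [CommRing R] [CommRing A] [CommRing B]
    [Algebra R A] [Algebra A B] [Algebra R B] [IsScalarTower R A B]
    -- g is integral
    (hint : (algebraMap A B).IsIntegral)
    -- the canonical morphism φ
    (φ : B ⊗[R] B →+* B ⊗[A] B)
    (hφ : ∀ x y : B, φ (x ⊗ₜ[R] y) = x ⊗ₜ[A] y)
    -- C is the weak normalization of A in B over R, as a subring of B
    (C : Subring B)
    (hC : (C : Set B) =
      {x : B | x ⊗ₜ[R] (1 : B) - (1 : B) ⊗ₜ[R] x ∈ (RingHom.ker φ).radical})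
    -- C is an A-algebra via g
    [Algebra A C]
    (hAC : ∀ a : A, (algebraMap A C a : B) = algebraMap A B a)
    -- the multiplication map γ : C ⊗[A] C → C
    (γ : C ⊗[A] C →+* C)
    (hγ : ∀ x y : C, γ (x ⊗ₜ[A] y) = x * y) :
    ∀ z ∈ RingHom.ker γ, IsNilpotent z := by
  intro z hz
  suffices h : ∀ q : Ideal (C ⊗[A] C), q.IsPrime → z ∈ q by
    rw [← mem_nilradical, nilradical_eq_sInf, Ideal.mem_sInf]
    exact fun J hJ => h J hJ
  intro q hq
  haveI : q.IsPrime := hq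
  -- set up the target field
  let π : C ⊗[A] C →+*
      AlgebraicClosure (FractionRing ((C ⊗[A] C) ⧸ q)) :=
    (algebraMap (FractionRing ((C ⊗[A] C) ⧸ q))
        (AlgebraicClosure (FractionRing ((C ⊗[A] C) ⧸ q)))).comp
      (algebraMap (C ⊗[A] C) (FractionRing ((C ⊗[A] C) ⧸ q)))
  have hπ : ∀ t : C ⊗[A] C, π t = 0 → t ∈ q := by
    intro t ht
    have h1 : algebraMap ((C ⊗[A] C) ⧸ q) (FractionRing ((C ⊗[A] C) ⧸ q))
        ((Ideal.Quotient.mk q) t) = 0 :=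
      (algebraMap (FractionRing ((C ⊗[A] C) ⧸ q))
        (AlgebraicClosure (FractionRing ((C ⊗[A] C) ⧸ q)))).injective (by
          simpa [π, IsScalarTower.algebraMap_apply (C ⊗[A] C) ((C ⊗[A] C) ⧸ q)
            (FractionRing ((C ⊗[A] C) ⧸ q)) t] using ht)
    have h2 : (Ideal.Quotient.mk q) t = 0 :=
      IsFractionRing.injective ((C ⊗[A] C) ⧸ q) (FractionRing ((C ⊗[A] C) ⧸ q))
        (by rw [map_zero]; exact h1)
    exact (Ideal.Quotient.eq_zero_iff_mem).1 h2
  -- the two projections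
  let u := π.comp (Algebra.TensorProduct.includeLeft (R := A) (A := C) (S := A)).toRingHom
  let v := π.comp (Algebra.TensorProduct.includeRight (R := A) (A := C)).toRingHom
  have hu : ∀ c : C, u c = π (c ⊗ₜ[A] 1) := fun c => rfl
  have hv : ∀ c : C, v c = π (1 ⊗ₜ[A] c) := fun c => rfl
  -- algebra structure of C on B
  letI : Algebra C B := C.subtype.toAlgebra
  have halgCB : ∀ c : C, algebraMap C B c = (c : B) := fun c => rfl
  have hinj : Function.Injective (algebraMap C B) := Subtype.val_injective
  haveI : IsScalarTower A C B := IsScalarTower.of_algebraMap_eq' (by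
    ext a
    exact (hAC a).symm)
  haveI : Algebra.IsIntegral A B := ⟨fun b => hint b⟩
  haveI : Algebra.IsIntegral C B := ⟨fun b => (Algebra.IsIntegral.isIntegral (R := A) b).tower_top⟩
  -- extend u and v to B
  obtain ⟨U, hU⟩ := exists_ringHom_extend_of_isIntegral hinj u
  obtain ⟨V, hV⟩ := exists_ringHom_extend_of_isIntegral hinj v
  -- U and V agree on the image of A
  letI : Algebra A (AlgebraicClosure (FractionRing ((C ⊗[A] C) ⧸ q))) :=
    (π.comp (algebraMap A (C ⊗[A] C))).toAlgebra
  have hUA : ∀ a : A, U (algebraMap A B a)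
      = algebraMap A (AlgebraicClosure (FractionRing ((C ⊗[A] C) ⧸ q))) a := by
    intro a
    rw [← hAC a, ← halgCB, hU]
    have h1 : (algebraMap A C a) ⊗ₜ[A] (1 : C) = algebraMap A (C ⊗[A] C) a :=
      (Algebra.TensorProduct.includeLeft (R := A) (A := C) (S := A)).commutes a
    rw [hu, h1]
    rfl
  have hVA : ∀ a : A, V (algebraMap A B a)
      = algebraMap A (AlgebraicClosure (FractionRing ((C ⊗[A] C) ⧸ q))) a := by
    intro a
    rw [← hAC a, ← halgCB, hV]
    have h1 : (1 : C) ⊗ₜ[A] (algebraMap A C a) = algebraMap A (C ⊗[A] C) a :=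
      (Algebra.TensorProduct.includeRight (R := A) (A := C)).commutes a
    rw [hv, h1]
    rfl
  let U' : B →ₐ[A] (AlgebraicClosure (FractionRing ((C ⊗[A] C) ⧸ q))) :=
    { toRingHom := U, commutes' := hUA }
  let V' : B →ₐ[A] (AlgebraicClosure (FractionRing ((C ⊗[A] C) ⧸ q))) :=
    { toRingHom := V, commutes' := hVA }
  let Φ := Algebra.TensorProduct.productMap U' V'
  -- key: U and V agree on C
  have key : ∀ c : C, U (c : B) = V (c : B) := by
    intro c
    have hmem : ((c : B) ⊗ₜ[R] (1 : B) - (1 : B) ⊗ₜ[R] (c : B)) ∈ (RingHom.ker φ).radical := by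
      have h2 := c.2
      rw [← SetLike.mem_coe, hC] at h2
      exact h2
    obtain ⟨n, hn⟩ := Ideal.mem_radical_iff.1 hmem
    have h0 : ((c : B) ⊗ₜ[A] (1 : B) - (1 : B) ⊗ₜ[A] (c : B)) ^ n = 0 := by
      have h3 := RingHom.mem_ker.1 hn
      rwa [map_pow, map_sub, hφ, hφ] at h3
    have hΦ : Φ ((c : B) ⊗ₜ[A] (1 : B) - (1 : B) ⊗ₜ[A] (c : B)) = U (c : B) - V (c : B) := by
      rw [map_sub]
      simp only [Φ, Algebra.TensorProduct.productMap_apply_tmul]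
      change U (c : B) * V 1 - U 1 * V (c : B) = _
      rw [map_one, map_one, mul_one, one_mul]
    have hnil : IsNilpotent (U (c : B) - V (c : B)) :=
      ⟨n, by rw [← hΦ, ← map_pow, h0, map_zero]⟩
    exact sub_eq_zero.1 hnil.eq_zero
  -- conclude
  have hπγ : ∀ t : C ⊗[A] C, π t = u (γ t) := by
    intro t
    induction t using TensorProduct.induction_on with
    | zero => simp [map_zero]
    | tmul x y =>
        have hxy : x ⊗ₜ[A] y = (x ⊗ₜ[A] (1 : C)) * ((1 : C) ⊗ₜ[A] y) := by
          rw [Algebra.TensorProduct.tmul_mul_tmul, mul_one, one_mul]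
        rw [hγ, hxy, map_mul, ← hu, ← hv, map_mul]
        have huv : v y = u y := by
          have h1 : u y = U (y : B) := (hU y).symm
          have h2 : v y = V (y : B) := (hV y).symm
          rw [h1, h2, key]
        rw [huv]
    | add a b ha hb => rw [map_add, map_add, map_add, ha, hb]
  have hz0 : γ z = 0 := RingHom.mem_ker.mp hz
  have hπz : π z = 0 := by
    rw [hπγ z, hz0, map_zero]
  exact hπ z hπz
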